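/- arXiv:1502.06799 — 2 statements merged into one kernel-verified Lean document; each statement's English description precedes it below -/
import Mathlib

section
/- For every integer T≥2, every a ∈ ℝ and every b ≥ 0: P[max_{k=1,...,T} Z_k ≤ a] ≥ Φ(a−b) · P[max_{k=1,...,T−1} Z_k ≤ b], where Φ denotes the standard normal cumulative distribution function. -/
open MeasureTheory Filter ProbabilityTheory
open scoped ENNReal

section Aux

lemma meas_eval {ι β : Type*} [MeasurableSpace ι] [MeasurableSingletonClass ι] [Countable ι]
    [MeasurableSpace β] : Measurable (fun q : (ι → β) × ι => q.1 q.2) := by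
  intro t ht
  have : (fun q : (ι → β) × ι => q.1 q.2) ⁻¹' t
      = ⋃ x : ι, ((fun f : ι → β => f x) ⁻¹' t) ×ˢ ({x} : Set ι) := by
    ext q
    simp only [Set.mem_preimage, Set.mem_iUnion, Set.mem_prod, Set.mem_singleton_iff]
    constructor
    · intro h; exact ⟨q.2, h, rfl⟩
    · rintro ⟨x, h, rfl⟩; exact h
  rw [this]
  exact MeasurableSet.iUnion fun x =>
    ((measurable_pi_apply x ht).prod (measurableSet_singleton x))

lemma sum_window {m : ℕ} (F : ℕ → ℝ) (k : Fin m) (c : ℕ) :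
    ∑ j ∈ Finset.univ.filter (fun j : Fin m => j ≤ k), F (j.1 + c)
      = ∑ i ∈ Finset.Icc c (k.1 + c), F i := by
  refine Finset.sum_bij' (fun j _ => j.1 + c) (fun i hi => ⟨i - c, ?_⟩) ?_ ?_ ?_ ?_ ?_
  · have := Finset.mem_Icc.1 hi
    have := k.isLt
    omega
  · intro j hj
    have hjk : j.1 ≤ k.1 := (Finset.mem_filter.1 hj).2
    simp only [Finset.mem_Icc]
    omega
  · intro i hi
    have := Finset.mem_Icc.1 hi
    simp only [Finset.mem_filter, Finset.mem_univ, true_and, Fin.le_def]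
    omega
  · intro j hj
    exact Fin.ext (by simp)
  · intro i hi
    have := Finset.mem_Icc.1 hi
    simp only
    omega
  · intro j hj
    rfl

end Aux

section Claim2

lemma downset_ineq (γ : Measure ℝ) [IsProbabilityMeasure γ] (c : ℝ) {D : Set ℝ}
    (hD : ∀ ⦃x y : ℝ⦄, x ≤ y → y ∈ D → x ∈ D) :
    γ (Set.Iic c) * γ D ≤ γ (Set.Iic c ∩ D) := by
  by_cases hsub : D ⊆ Set.Iic c
  · rw [Set.inter_eq_self_of_subset_right hsub]
    calc γ (Set.Iic c) * γ D ≤ 1 * γ D := by gcongr; exact prob_le_one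
      _ = γ D := one_mul _
  · obtain ⟨t, htD, htc⟩ := Set.not_subset.1 hsub
    have hsub2 : Set.Iic c ⊆ D := fun x hx => hD (hx.trans (le_of_not_ge htc)) htD
    rw [Set.inter_eq_self_of_subset_left hsub2]
    calc γ (Set.Iic c) * γ D ≤ γ (Set.Iic c) * 1 := by gcongr; exact prob_le_one
      _ = γ (Set.Iic c) := mul_one _

lemma pi_downset_ineq {ι : Type*} [Fintype ι] [DecidableEq ι]
    (γ : Measure ℝ) [IsProbabilityMeasure γ] (j0 : ι) (c0 : ℝ)
    {B : Set (ι → ℝ)} (hB : MeasurableSet B)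
    (hdown : ∀ (g : ι → ℝ) (t t' : ℝ), t ≤ t' →
      Function.update g j0 t' ∈ B → Function.update g j0 t ∈ B) :
    γ (Set.Iic c0) * Measure.pi (fun _ : ι => γ) B
      ≤ Measure.pi (fun _ : ι => γ) ({g : ι → ℝ | g j0 ≤ c0} ∩ B) := by
  classical
  set π := Measure.pi (fun _ : ι => γ) with hπ
  set A : Set (ι → ℝ) := {g : ι → ℝ | g j0 ≤ c0} with hA
  have hAmeas : MeasurableSet A := (measurable_pi_apply j0) measurableSet_Iic
  set x₀ : ι → ℝ := fun _ => 0 with hx₀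
  set μs : ι → Measure ℝ := fun _ => γ with hμs
  have slice : ∀ (S : Set (ι → ℝ)), MeasurableSet S → ∀ x : ι → ℝ,
      ∫⁻ t, S.indicator (1 : (ι → ℝ) → ℝ≥0∞) (Function.update x j0 t) ∂γ
        = γ {t : ℝ | Function.update x j0 t ∈ S} := by
    intro S hS x
    have : (fun t => S.indicator (1 : (ι → ℝ) → ℝ≥0∞) (Function.update x j0 t))
        = Set.indicator {t : ℝ | Function.update x j0 t ∈ S} (1 : ℝ → ℝ≥0∞) := by
      funext t
      by_cases ht : Function.update x j0 t ∈ S <;>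
        simp [Set.indicator_apply, ht]
    rw [this, lintegral_indicator_one]
    exact (measurable_update x) hS
  have hrepr : ∀ (S : Set (ι → ℝ)), MeasurableSet S →
      π S = (∫⋯∫⁻_Finset.univ.erase j0,
        (fun x => γ {t : ℝ | Function.update x j0 t ∈ S}) ∂μs) x₀ := by
    intro S hS
    have h1 : π S = ∫⁻ x, S.indicator 1 x ∂π := (lintegral_indicator_one hS).symm
    rw [h1, lintegral_eq_lmarginal_univ (μ := μs) x₀,
      lmarginal_erase' _ (measurable_one.indicator hS) (Finset.mem_univ j0)]
    congr 1
    funext x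
    exact slice S hS x
  rw [hrepr B hB, hrepr (A ∩ B) (hAmeas.inter hB)]
  have hpoint : ∀ x : ι → ℝ,
      γ (Set.Iic c0) * γ {t : ℝ | Function.update x j0 t ∈ B}
        ≤ γ {t : ℝ | Function.update x j0 t ∈ A ∩ B} := by
    intro x
    have hD : ∀ ⦃s t : ℝ⦄, s ≤ t → t ∈ {t : ℝ | Function.update x j0 t ∈ B} →
        s ∈ {t : ℝ | Function.update x j0 t ∈ B} :=
      fun s t hst ht => hdown x s t hst ht
    refine (downset_ineq γ c0 hD).trans (le_of_eq ?_)
    congr 1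
    ext t
    simp only [Set.mem_inter_iff, Set.mem_Iic, Set.mem_setOf_eq, hA,
      Function.update_self]
  calc γ (Set.Iic c0) * (∫⋯∫⁻_Finset.univ.erase j0,
        (fun x => γ {t : ℝ | Function.update x j0 t ∈ B}) ∂μs) x₀
      = (∫⋯∫⁻_Finset.univ.erase j0,
        (fun x => γ (Set.Iic c0) * γ {t : ℝ | Function.update x j0 t ∈ B}) ∂μs) x₀ := by
        simp only [lmarginal]
        rw [lintegral_const_mul' _ _ (measure_ne_top γ _)]
    _ ≤ _ := lmarginal_mono hpoint x₀

end Claim2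

section Laws

lemma iid_subfamily_law {Ω ι β : Type*} [MeasurableSpace Ω] [MeasurableSpace β]
    (P : Measure Ω) [IsProbabilityMeasure P] {Y : ι → Ω → β} (hm : ∀ i, Measurable (Y i))
    (h : iIndepFun Y P)
    {ι' : Type*} [Fintype ι'] {v : ι' → ι} (hv : Function.Injective v) :
    Measure.map (fun ω (j : ι') => Y (v j) ω) P
      = Measure.pi (fun j : ι' => Measure.map (Y (v j)) P) := by
  classical
  have hvec : Measurable (fun ω (j : ι') => Y (v j) ω) :=
    measurable_pi_lambda _ fun j => hm _
  haveI : ∀ j : ι', IsProbabilityMeasure (Measure.map (Y (v j)) P) :=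
    fun j => Measure.isProbabilityMeasure_map (hm _).aemeasurable
  refine (Measure.pi_eq fun s hs => ?_).symm
  rw [Measure.map_apply hvec (MeasurableSet.univ_pi hs)]
  set sets : ι → Set β := fun i => if hi : ∃ j, v j = i then s hi.choose else Set.univ with hsets
  have key : ∀ j : ι', sets (v j) = s j := by
    intro j
    have hex : ∃ j', v j' = v j := ⟨j, rfl⟩
    have := hex.choose_spec
    have hj : hex.choose = j := hv this
    simp only [hsets, dif_pos hex, hj]
  have hpre : (fun ω (j : ι') => Y (v j) ω) ⁻¹' Set.pi Set.univ s
      = ⋂ i ∈ Finset.image v Finset.univ, Y i ⁻¹' sets i := by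
    ext ω
    simp only [Set.mem_preimage, Set.mem_pi, Set.mem_univ, true_implies, Set.mem_iInter,
      Finset.mem_image, Finset.mem_univ, true_and]
    constructor
    · rintro hall i ⟨j, rfl⟩
      rw [key]; exact hall j
    · intro hall j
      have := hall (v j) ⟨j, rfl⟩
      rwa [key] at this
  rw [hpre, h.measure_inter_preimage_eq_mul _ (fun i _ => ?_), Finset.prod_image
    (fun j _ j' _ hjj => hv hjj)]
  · exact Finset.prod_congr rfl fun j _ => by
      rw [key, Measure.map_apply (hm _) (hs j)]
  · by_cases hi : ∃ j, v j = i
    · simp only [hsets, dif_pos hi]; exact hs _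
    · simp only [hsets, dif_neg hi]; exact MeasurableSet.univ

/-- The law of `(ξ_{w j})_j` depends only on the coincidence pattern of `w`. -/
lemma pattern_law {Ω : Type*} [MeasurableSpace Ω] (P : Measure Ω) [IsProbabilityMeasure P]
    {d : ℕ} (ξ : (Fin d → ℤ) → Ω → ℝ) (hξmeas : ∀ x, Measurable (ξ x))
    (hξlaw : ∀ x, Measure.map (ξ x) P = gaussianReal 0 1)
    (hξindep : iIndepFun ξ P)
    {m : ℕ} (w w' : Fin m → (Fin d → ℤ))
    (hpat : ∀ i j, w i = w j ↔ w' i = w' j) :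
    Measure.map (fun ω (j : Fin m) => ξ (w j) ω) P
      = Measure.map (fun ω (j : Fin m) => ξ (w' j) ω) P := by
  classical
  -- canonical representative of each coincidence class
  set rep : Fin m → Fin m := fun i =>
    (Finset.univ.filter (fun j => w j = w i)).min' ⟨i, by simp⟩ with hrep
  have hfilter : ∀ i i', w i = w i' →
      Finset.univ.filter (fun j => w j = w i) = Finset.univ.filter (fun j => w j = w i') := by
    intro i i' h
    apply Finset.filter_congr
    intro j _
    exact ⟨fun hh => hh.trans h, fun hh => hh.trans h.symm⟩
  have hwrep : ∀ i, w (rep i) = w i := by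
    intro i
    have := (Finset.univ.filter (fun j => w j = w i)).min'_mem ⟨i, by simp⟩
    simpa using (Finset.mem_filter.1 this).2
  have hreprep : ∀ i i', w i = w i' → rep i = rep i' := by
    intro i i' h
    simp only [hrep, hfilter i i' h]
  have hw'rep : ∀ i, w' (rep i) = w' i := fun i => (hpat _ _).1 (hwrep i)
  set D : Finset (Fin m) := Finset.image rep Finset.univ with hD
  have hmem : ∀ i, rep i ∈ D := fun i => Finset.mem_image_of_mem rep (Finset.mem_univ i)
  have hfix : ∀ j : Fin m, j ∈ D → rep j = j := by
    rintro j hj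
    obtain ⟨i, _, rfl⟩ := Finset.mem_image.1 hj
    exact hreprep _ _ (hwrep i)
  have hinj : Function.Injective (fun x : {x // x ∈ D} => w x.1) := by
    rintro ⟨j1, h1⟩ ⟨j2, h2⟩ h
    simp only at h
    have := hreprep _ _ h
    rw [hfix _ h1, hfix _ h2] at this
    exact Subtype.ext this
  have hinj' : Function.Injective (fun x : {x // x ∈ D} => w' x.1) := by
    rintro ⟨j1, h1⟩ ⟨j2, h2⟩ h
    simp only at h
    have hw : w j1 = w j2 := (hpat _ _).2 h
    have := hreprep _ _ hw
    rw [hfix _ h1, hfix _ h2] at this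
    exact Subtype.ext this
  set pb : ({x // x ∈ D} → ℝ) → (Fin m → ℝ) := fun g i => g ⟨rep i, hmem i⟩ with hpb
  have hpbmeas : Measurable pb := measurable_pi_lambda _ fun i => measurable_pi_apply _
  have key : ∀ (u : Fin m → (Fin d → ℤ)), (∀ i, u (rep i) = u i) →
      Function.Injective (fun x : {x // x ∈ D} => u x.1) →
      Measure.map (fun ω (j : Fin m) => ξ (u j) ω) P
        = Measure.map pb (Measure.pi (fun _ : {x // x ∈ D} => gaussianReal 0 1)) := by
    intro u hu huinj
    have hcomp : (fun ω (j : Fin m) => ξ (u j) ω)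
        = pb ∘ (fun ω (x : {x // x ∈ D}) => ξ (u x.1) ω) := by
      funext ω
      funext j
      simp only [hpb, Function.comp_apply]
      rw [hu j]
    rw [hcomp, ← Measure.map_map hpbmeas (measurable_pi_lambda _ fun x => hξmeas _),
      iid_subfamily_law P hξmeas hξindep huinj]
    have : (fun x : {x // x ∈ D} => Measure.map (ξ (u x.1)) P)
        = fun _ => gaussianReal 0 1 := funext fun x => hξlaw _
    rw [this]
  rw [key w hwrep hinj, key w' hw'rep hinj']

lemma walk_shift_law {Ω : Type*} [MeasurableSpace Ω] (P : Measure Ω) [IsProbabilityMeasure P]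
    {d : ℕ} (S : ℕ → Ω → (Fin d → ℤ)) (hSmeas : ∀ n, Measurable (S n))
    (hS0 : ∀ ω, S 0 ω = 0)
    (hSindep : iIndepFun
      (fun n ω => S (n + 1) ω - S n ω) P)
    (hSident : ∀ n : ℕ,
      IdentDistrib (fun ω => S (n + 1) ω - S n ω) (fun ω => S 1 ω - S 0 ω) P P)
    (m : ℕ) :
    Measure.map (fun ω (j : Fin m) => S (j.1 + 2) ω - S 1 ω) P
      = Measure.map (fun ω (j : Fin m) => S (j.1 + 1) ω) P := by
  classical
  haveI : MeasurableSingletonClass (Fin d → ℤ) := inferInstance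
  set Y : ℕ → Ω → (Fin d → ℤ) := fun n ω => S (n + 1) ω - S n ω with hY
  have hYmeas : ∀ n, Measurable (Y n) := fun n => (hSmeas (n + 1)).sub (hSmeas n)
  set psum : (Fin m → (Fin d → ℤ)) → (Fin m → (Fin d → ℤ)) :=
    fun x j => ∑ i ∈ Finset.range (j.1 + 1), (if h : i < m then x ⟨i, h⟩ else 0) with hpsum
  have hpsummeas : Measurable psum := by
    refine measurable_pi_lambda _ fun j => Finset.measurable_sum _ fun i _ => ?_
    by_cases h : i < m
    · simp only [dif_pos h]; exact measurable_pi_apply _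
    · simp only [dif_neg h]; exact measurable_const
  have hlaw1 : Measure.map (fun ω (j : Fin m) => Y (j.1 + 1) ω) P
      = Measure.pi (fun _ : Fin m => Measure.map (fun ω => S 1 ω - S 0 ω) P) := by
    rw [iid_subfamily_law P hYmeas hSindep
      (v := fun j : Fin m => j.1 + 1) (fun j j' h => Fin.ext (by simpa using h))]
    have : (fun j : Fin m => Measure.map (Y (j.1 + 1)) P)
        = fun _ => Measure.map (fun ω => S 1 ω - S 0 ω) P :=
      funext fun j => (hSident _).map_eq
    rw [this]
  have hlaw2 : Measure.map (fun ω (j : Fin m) => Y j.1 ω) P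
      = Measure.pi (fun _ : Fin m => Measure.map (fun ω => S 1 ω - S 0 ω) P) := by
    rw [iid_subfamily_law P hYmeas hSindep
      (v := fun j : Fin m => j.1) (fun j j' h => Fin.ext (by simpa using h))]
    have : (fun j : Fin m => Measure.map (Y j.1) P)
        = fun _ => Measure.map (fun ω => S 1 ω - S 0 ω) P :=
      funext fun j => (hSident _).map_eq
    rw [this]
  have hcomp1 : (fun ω (j : Fin m) => S (j.1 + 2) ω - S 1 ω)
      = psum ∘ (fun ω (j : Fin m) => Y (j.1 + 1) ω) := by
    funext ω
    funext j
    simp only [hpsum, Function.comp_apply]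
    have h2 : (∑ i ∈ Finset.range (j.1 + 1),
        if h : i < m then (fun j : Fin m => Y (j.1 + 1) ω) ⟨i, h⟩ else 0)
        = ∑ i ∈ Finset.range (j.1 + 1), (S (i + 1 + 1) ω - S (i + 1) ω) := by
      refine Finset.sum_congr rfl fun i hi => ?_
      have h1 : i < m := by
        have := Finset.mem_range.1 hi
        have := j.isLt
        omega
      rw [dif_pos h1]
    rw [h2, Finset.sum_range_sub (fun i => S (i + 1) ω) (j.1 + 1)]
  have hcomp2 : (fun ω (j : Fin m) => S (j.1 + 1) ω)
      = psum ∘ (fun ω (j : Fin m) => Y j.1 ω) := by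
    funext ω
    funext j
    simp only [hpsum, Function.comp_apply]
    have h2 : (∑ i ∈ Finset.range (j.1 + 1),
        if h : i < m then (fun j : Fin m => Y j.1 ω) ⟨i, h⟩ else 0)
        = ∑ i ∈ Finset.range (j.1 + 1), (S (i + 1) ω - S i ω) := by
      refine Finset.sum_congr rfl fun i hi => ?_
      have h1 : i < m := by
        have := Finset.mem_range.1 hi
        have := j.isLt
        omega
      rw [dif_pos h1]
    rw [h2, Finset.sum_range_sub (fun i => S i ω) (j.1 + 1), hS0, sub_zero]
  rw [hcomp1, hcomp2, ← Measure.map_map hpsummeas (measurable_pi_lambda _ fun j => hYmeas _),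
    ← Measure.map_map hpsummeas (measurable_pi_lambda _ fun j => hYmeas _), hlaw1, hlaw2]

end Laws

/-- Conditional (on the walk path) FKG-type inequality for a fixed path `s`. -/
lemma cond_ineq {Ω : Type*} [MeasurableSpace Ω] (P : Measure Ω) [IsProbabilityMeasure P]
    {d : ℕ} (ξ : (Fin d → ℤ) → Ω → ℝ) (hξmeas : ∀ x, Measurable (ξ x))
    (hξlaw : ∀ x, Measure.map (ξ x) P = gaussianReal 0 1)
    (hξindep : iIndepFun ξ P)
    (T : ℕ) (hT : 2 ≤ T) (b c0 : ℝ) (s : ℕ → Fin d → ℤ) :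
    gaussianReal 0 1 (Set.Iic c0)
        * P {ω | ∀ k ∈ Finset.Icc 2 T, ∑ i ∈ Finset.Icc 2 k, ξ (s i) ω ≤ b}
      ≤ P {ω | ξ (s 1) ω ≤ c0 ∧
          ∀ k ∈ Finset.Icc 2 T, ∑ i ∈ Finset.Icc 2 k, ξ (s i) ω ≤ b} := by
  classical
  set γ := gaussianReal 0 1 with hγ
  set R : Finset (Fin d → ℤ) := Finset.image s (Finset.Icc 1 T) with hR
  have hmemR : ∀ i, 1 ≤ i → i ≤ T → s i ∈ R := fun i h1 h2 =>
    Finset.mem_image_of_mem s (Finset.mem_Icc.2 ⟨h1, h2⟩)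
  have h1R : s 1 ∈ R := hmemR 1 le_rfl (by omega)
  set j0 : {x // x ∈ R} := ⟨s 1, h1R⟩ with hj0
  set ext : ({x // x ∈ R} → ℝ) → (Fin d → ℤ) → ℝ :=
    fun g x => if h : x ∈ R then g ⟨x, h⟩ else 0 with hext
  set CB : Set ({x // x ∈ R} → ℝ) :=
    {g | ∀ k ∈ Finset.Icc 2 T, ∑ i ∈ Finset.Icc 2 k, ext g (s i) ≤ b} with hCB
  have hextmeas : ∀ x : Fin d → ℤ, Measurable (fun g : {x // x ∈ R} → ℝ => ext g x) := by
    intro x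
    by_cases h : x ∈ R
    · simp only [hext, dif_pos h]; exact measurable_pi_apply _
    · simp only [hext, dif_neg h]; exact measurable_const
  have hCBm : MeasurableSet CB := by
    have : CB = ⋂ k ∈ Finset.Icc 2 T,
        {g : {x // x ∈ R} → ℝ | ∑ i ∈ Finset.Icc 2 k, ext g (s i) ≤ b} := by
      ext g; simp [hCB, Set.mem_iInter]
    rw [this]
    exact MeasurableSet.biInter (Finset.Icc 2 T).countable_toSet fun k _ =>
      measurableSet_le (Finset.measurable_sum _ fun i _ => hextmeas (s i)) measurable_const
  set vec : Ω → ({x // x ∈ R} → ℝ) := fun ω x => ξ x.1 ω with hvec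
  have hvecmeas : Measurable vec := measurable_pi_lambda _ fun x => hξmeas _
  have hlawR : Measure.map vec P = Measure.pi (fun _ : {x // x ∈ R} => γ) := by
    rw [hvec]
    rw [iid_subfamily_law P hξmeas hξindep
      (v := fun x : {x // x ∈ R} => x.1) Subtype.coe_injective]
    have : (fun x : {x // x ∈ R} => Measure.map (ξ x.1) P) = fun _ => γ :=
      funext fun x => hξlaw _
    rw [this]
  -- identify the two events as preimages
  have hpreB : vec ⁻¹' CB
      = {ω | ∀ k ∈ Finset.Icc 2 T, ∑ i ∈ Finset.Icc 2 k, ξ (s i) ω ≤ b} := by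
    ext ω
    simp only [Set.mem_preimage, hCB, Set.mem_setOf_eq]
    refine forall_congr' fun k => forall_congr' fun hk => ?_
    have hkT := (Finset.mem_Icc.1 hk).2
    have hsum : ∑ i ∈ Finset.Icc 2 k, ext (vec ω) (s i)
        = ∑ i ∈ Finset.Icc 2 k, ξ (s i) ω := by
      refine Finset.sum_congr rfl fun i hi => ?_
      have hi' := Finset.mem_Icc.1 hi
      have : s i ∈ R := hmemR i (by omega) (by omega)
      simp only [hext, dif_pos this, hvec]
    rw [hsum]
  have hpreAB : vec ⁻¹' ({g : {x // x ∈ R} → ℝ | g j0 ≤ c0} ∩ CB)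
      = {ω | ξ (s 1) ω ≤ c0 ∧
          ∀ k ∈ Finset.Icc 2 T, ∑ i ∈ Finset.Icc 2 k, ξ (s i) ω ≤ b} := by
    rw [Set.preimage_inter, hpreB]
    rfl
  -- down-closedness
  have hdown : ∀ (g : {x // x ∈ R} → ℝ) (t t' : ℝ), t ≤ t' →
      Function.update g j0 t' ∈ CB → Function.update g j0 t ∈ CB := by
    intro g t t' htt hmem k hk
    refine le_trans (Finset.sum_le_sum fun i hi => ?_) (hmem k hk)
    by_cases hsi : s i ∈ R
    · simp only [hext, dif_pos hsi]
      by_cases hij : (⟨s i, hsi⟩ : {x // x ∈ R}) = j0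
      · rw [hij, Function.update_self, Function.update_self]; exact htt
      · rw [Function.update_of_ne hij, Function.update_of_ne hij]
    · simp only [hext, dif_neg hsi]
      exact le_rfl
  -- put it together
  have hμB : P {ω | ∀ k ∈ Finset.Icc 2 T, ∑ i ∈ Finset.Icc 2 k, ξ (s i) ω ≤ b}
      = Measure.pi (fun _ : {x // x ∈ R} => γ) CB := by
    rw [← hlawR, Measure.map_apply hvecmeas hCBm, hpreB]
  have hμAB : P {ω | ξ (s 1) ω ≤ c0 ∧
        ∀ k ∈ Finset.Icc 2 T, ∑ i ∈ Finset.Icc 2 k, ξ (s i) ω ≤ b}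
      = Measure.pi (fun _ : {x // x ∈ R} => γ)
        ({g : {x // x ∈ R} → ℝ | g j0 ≤ c0} ∩ CB) := by
    have hCAm : MeasurableSet {g : {x // x ∈ R} → ℝ | g j0 ≤ c0} :=
      measurableSet_le (measurable_pi_apply j0) measurable_const
    rw [← hlawR, Measure.map_apply hvecmeas (hCAm.inter hCBm), hpreAB]
  rw [hμB, hμAB]
  exact pi_downset_ineq γ j0 c0 hCBm hdown

/-- Let `d ≥ 1`, let `(S_n)` be a random walk on `ℤ^d` (i.i.d. increments, `S 0 = 0`) and let
`(ξ_x)_{x ∈ ℤ^d}` be i.i.d. standard Gaussians independent of `S`.  Let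
`Z_n = ∑_{i=1}^n ξ_{S_i}` be the random walk in random scenery.  Then for every integer
`T ≥ 2`, every `a ∈ ℝ` and every `b ≥ 0`,
`P[max_{k=1,…,T} Z_k ≤ a] ≥ Φ(a - b) · P[max_{k=1,…,T-1} Z_k ≤ b]`, where `Φ` is the
standard normal cumulative distribution function. -/
theorem stmt12
    {Ω : Type*} [MeasurableSpace Ω] (P : Measure Ω) [IsProbabilityMeasure P]
    (d : ℕ) (hd : 1 ≤ d)
    (S : ℕ → Ω → (Fin d → ℤ)) (hSmeas : ∀ n, Measurable (S n))
    (hS0 : ∀ ω, S 0 ω = 0)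
    (hSindep : iIndepFun
      (fun n ω => S (n + 1) ω - S n ω) P)
    (hSident : ∀ n : ℕ,
      IdentDistrib (fun ω => S (n + 1) ω - S n ω) (fun ω => S 1 ω - S 0 ω) P P)
    (ξ : (Fin d → ℤ) → Ω → ℝ) (hξmeas : ∀ x, Measurable (ξ x))
    (hξlaw : ∀ x, Measure.map (ξ x) P = gaussianReal 0 1)
    (hξindep : iIndepFun ξ P)
    (hξS : IndepFun (fun ω => fun x : Fin d → ℤ => ξ x ω)
      (fun ω => fun n : ℕ => S n ω) P)
    (Z : ℕ → Ω → ℝ) (hZ : ∀ n ω, Z n ω = ∑ i ∈ Finset.Icc 1 n, ξ (S i ω) ω) :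
    ∀ T : ℕ, 2 ≤ T → ∀ a : ℝ, ∀ b : ℝ, 0 ≤ b →
      (gaussianReal 0 1 (Set.Iic (a - b))).toReal *
          (P {ω | ∀ k ∈ Finset.Icc 1 (T - 1), Z k ω ≤ b}).toReal ≤
        (P {ω | ∀ k ∈ Finset.Icc 1 T, Z k ω ≤ a}).toReal := by
  classical
  intro T hT a b hb
  set γ := gaussianReal 0 1 with hγ
  set c0 := a - b with hc0
  set m := T - 1 with hmdef
  have hmT : m + 1 = T := by omega
  set W : Ω → ((Fin d → ℤ) → ℝ) := fun ω => fun x : Fin d → ℤ => ξ x ω with hW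
  set V : Ω → (ℕ → Fin d → ℤ) := fun ω => fun n : ℕ => S n ω with hV
  have hWmeas : Measurable W := measurable_pi_lambda _ fun x => hξmeas x
  have hVmeas : Measurable V := measurable_pi_lambda _ fun n => hSmeas n
  set μ := Measure.map W P with hμ
  set ν := Measure.map V P with hν
  haveI : IsProbabilityMeasure μ := Measure.isProbabilityMeasure_map hWmeas.aemeasurable
  haveI : IsProbabilityMeasure ν := Measure.isProbabilityMeasure_map hVmeas.aemeasurable
  have hΨmeas : Measurable (fun ω => (W ω, V ω)) := hWmeas.prodMk hVmeas
  have hprod : Measure.map (fun ω => (W ω, V ω)) P = μ.prod ν :=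
    (indepFun_iff_map_prod_eq_prod_map_map hWmeas.aemeasurable hVmeas.aemeasurable).1 hξS
  -- measurability of evaluation maps on the product space
  have hev : ∀ i : ℕ, Measurable
      (fun p : ((Fin d → ℤ) → ℝ) × (ℕ → Fin d → ℤ) => p.1 (p.2 i)) := by
    intro i
    have h1 : Measurable (fun p : ((Fin d → ℤ) → ℝ) × (ℕ → Fin d → ℤ) => (p.1, p.2 i)) := by
      fun_prop
    have h := (meas_eval (ι := Fin d → ℤ) (β := ℝ)).comp h1
    exact h
  -- the three relevant sets in the product space
  set Bset : Set (((Fin d → ℤ) → ℝ) × (ℕ → Fin d → ℤ)) :=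
    {p | ∀ k ∈ Finset.Icc 2 T, ∑ i ∈ Finset.Icc 2 k, p.1 (p.2 i) ≤ b} with hBset
  set ABset : Set (((Fin d → ℤ) → ℝ) × (ℕ → Fin d → ℤ)) :=
    {p | p.1 (p.2 1) ≤ c0} ∩ Bset with hABset
  set G2set : Set (((Fin d → ℤ) → ℝ) × (ℕ → Fin d → ℤ)) :=
    {p | ∀ k ∈ Finset.Icc 1 m, ∑ i ∈ Finset.Icc 1 k, p.1 (p.2 i) ≤ b} with hG2set
  have hBsetm : MeasurableSet Bset := by
    have : Bset = ⋂ k ∈ Finset.Icc 2 T,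
        {p : ((Fin d → ℤ) → ℝ) × (ℕ → Fin d → ℤ) |
          ∑ i ∈ Finset.Icc 2 k, p.1 (p.2 i) ≤ b} := by
      ext p; simp [hBset, Set.mem_iInter]
    rw [this]
    exact MeasurableSet.biInter (Finset.Icc 2 T).countable_toSet fun k _ =>
      measurableSet_le (Finset.measurable_sum _ fun i _ => hev i) measurable_const
  have hABsetm : MeasurableSet ABset :=
    (measurableSet_le (hev 1) measurable_const).inter hBsetm
  have hG2setm : MeasurableSet G2set := by
    have : G2set = ⋂ k ∈ Finset.Icc 1 m,
        {p : ((Fin d → ℤ) → ℝ) × (ℕ → Fin d → ℤ) |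
          ∑ i ∈ Finset.Icc 1 k, p.1 (p.2 i) ≤ b} := by
      ext p; simp [hG2set, Set.mem_iInter]
    rw [this]
    exact MeasurableSet.biInter (Finset.Icc 1 m).countable_toSet fun k _ =>
      measurableSet_le (Finset.measurable_sum _ fun i _ => hev i) measurable_const
  -- STEP A : (μ.prod ν) ABset ≤ P (target event)
  have stepA : (μ.prod ν) ABset ≤ P {ω | ∀ k ∈ Finset.Icc 1 T, Z k ω ≤ a} := by
    rw [← hprod, Measure.map_apply hΨmeas hABsetm]
    refine measure_mono fun ω hω => ?_
    obtain ⟨h1, h2⟩ := hω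
    intro k hk
    obtain ⟨hk1, hkT⟩ := Finset.mem_Icc.1 hk
    rw [hZ]
    have hsplit : Finset.Icc 1 k = insert 1 (Finset.Icc 2 k) := by
      ext i; simp only [Finset.mem_Icc, Finset.mem_insert]; omega
    rw [hsplit, Finset.sum_insert (by simp [Finset.mem_Icc])]
    by_cases hk2 : 2 ≤ k
    · have h3 := h2 k (Finset.mem_Icc.2 ⟨hk2, hkT⟩)
      calc ξ (S 1 ω) ω + ∑ i ∈ Finset.Icc 2 k, ξ (S i ω) ω ≤ c0 + b := add_le_add h1 h3
        _ = a := by rw [hc0]; ring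
    · have hk1' : k = 1 := by omega
      subst hk1'
      rw [Finset.Icc_eq_empty (by omega), Finset.sum_empty, add_zero]
      calc ξ (S 1 ω) ω ≤ c0 := h1
        _ ≤ a := by rw [hc0]; linarith
  -- STEP B : P (second event) = (μ.prod ν) G2set
  have stepB : P {ω | ∀ k ∈ Finset.Icc 1 m, Z k ω ≤ b} = (μ.prod ν) G2set := by
    rw [← hprod, Measure.map_apply hΨmeas hG2setm]
    congr 1
    ext ω
    simp only [Set.mem_setOf_eq, Set.mem_preimage]
    refine forall_congr' fun k => forall_congr' fun hk => ?_
    rw [hZ]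
  -- STEP C : slice representations
  have hBint : (μ.prod ν) Bset
      = ∫⁻ s, μ ((fun f => (f, s)) ⁻¹' Bset) ∂ν := Measure.prod_apply_symm hBsetm
  have hABint : (μ.prod ν) ABset
      = ∫⁻ s, μ ((fun f => (f, s)) ⁻¹' ABset) ∂ν := Measure.prod_apply_symm hABsetm
  have hG2int : (μ.prod ν) G2set
      = ∫⁻ s, μ ((fun f => (f, s)) ⁻¹' G2set) ∂ν := Measure.prod_apply_symm hG2setm
  -- slices as P-probabilities
  have hsliceB : ∀ s : ℕ → Fin d → ℤ, μ ((fun f => (f, s)) ⁻¹' Bset)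
      = P {ω | ∀ k ∈ Finset.Icc 2 T, ∑ i ∈ Finset.Icc 2 k, ξ (s i) ω ≤ b} := by
    intro s
    have hsm : Measurable (fun f : (Fin d → ℤ) → ℝ => (f, s)) :=
      measurable_id.prodMk measurable_const
    rw [hμ, Measure.map_apply hWmeas (hsm hBsetm)]
    rfl
  have hsliceAB : ∀ s : ℕ → Fin d → ℤ, μ ((fun f => (f, s)) ⁻¹' ABset)
      = P {ω | ξ (s 1) ω ≤ c0 ∧
          ∀ k ∈ Finset.Icc 2 T, ∑ i ∈ Finset.Icc 2 k, ξ (s i) ω ≤ b} := by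
    intro s
    have hsm : Measurable (fun f : (Fin d → ℤ) → ℝ => (f, s)) :=
      measurable_id.prodMk measurable_const
    rw [hμ, Measure.map_apply hWmeas (hsm hABsetm)]
    rfl
  have hsliceG2 : ∀ s : ℕ → Fin d → ℤ, μ ((fun f => (f, s)) ⁻¹' G2set)
      = P {ω | ∀ k ∈ Finset.Icc 1 m, ∑ i ∈ Finset.Icc 1 k, ξ (s i) ω ≤ b} := by
    intro s
    have hsm : Measurable (fun f : (Fin d → ℤ) → ℝ => (f, s)) :=
      measurable_id.prodMk measurable_const
    rw [hμ, Measure.map_apply hWmeas (hsm hG2setm)]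
    rfl
  -- STEP D : pointwise conditional inequality
  have stepD : ∀ s : ℕ → Fin d → ℤ,
      γ (Set.Iic c0) * μ ((fun f => (f, s)) ⁻¹' Bset)
        ≤ μ ((fun f => (f, s)) ⁻¹' ABset) := by
    intro s
    rw [hsliceB s, hsliceAB s]
    exact cond_ineq P ξ hξmeas hξlaw hξindep T hT b c0 s
  -- STEP E : equality of the B-part and the G2-part via the shift
  -- the canonical window event
  set Gt : Set (Fin m → ℝ) :=
    {y | ∀ k : Fin m, ∑ j ∈ Finset.univ.filter (fun j : Fin m => j ≤ k), y j ≤ b} with hGt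
  have hGtm : MeasurableSet Gt := by
    have : Gt = ⋂ k : Fin m,
        {y : Fin m → ℝ | ∑ j ∈ Finset.univ.filter (fun j : Fin m => j ≤ k), y j ≤ b} := by
      ext y; simp [hGt, Set.mem_iInter]
    rw [this]
    exact MeasurableSet.iInter fun k =>
      measurableSet_le (Finset.measurable_sum _ fun j _ => measurable_pi_apply j)
        measurable_const
  set Hfun : (Fin m → (Fin d → ℤ)) → ℝ≥0∞ :=
    fun w => P ((fun ω (j : Fin m) => ξ (w j) ω) ⁻¹' Gt) with hHfun
  have hHpat : ∀ w w' : Fin m → (Fin d → ℤ), (∀ i j, w i = w j ↔ w' i = w' j) →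
      Hfun w = Hfun w' := by
    intro w w' hp
    have hm1 : Measurable (fun ω (j : Fin m) => ξ (w j) ω) :=
      measurable_pi_lambda _ fun j => hξmeas _
    have hm2 : Measurable (fun ω (j : Fin m) => ξ (w' j) ω) :=
      measurable_pi_lambda _ fun j => hξmeas _
    rw [hHfun]
    simp only
    rw [← Measure.map_apply hm1 hGtm, ← Measure.map_apply hm2 hGtm,
      pattern_law P ξ hξmeas hξlaw hξindep w w' hp]
  -- identification of the B-slice with the window function
  have hBwin : ∀ s : ℕ → Fin d → ℤ, μ ((fun f => (f, s)) ⁻¹' Bset)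
      = Hfun (fun j => s (j.1 + 2)) := by
    intro s
    rw [hsliceB s, hHfun]
    congr 1
    ext ω
    simp only [Set.mem_setOf_eq, Set.mem_preimage, hGt]
    constructor
    · intro h k
      rw [sum_window (fun i => ξ (s i) ω) k 2]
      refine h (k.1 + 2) (Finset.mem_Icc.2 ⟨by omega, ?_⟩)
      have := k.isLt
      omega
    · intro h k hk
      obtain ⟨hk2, hkT⟩ := Finset.mem_Icc.1 hk
      have hlt : k - 2 < m := by omega
      have h2 := h ⟨k - 2, hlt⟩
      rw [sum_window (fun i => ξ (s i) ω) ⟨k - 2, hlt⟩ 2] at h2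
      have hkk : k - 2 + 2 = k := by omega
      rw [show ((⟨k - 2, hlt⟩ : Fin m) : ℕ) = k - 2 from rfl, hkk] at h2
      exact h2
  have hG2win : ∀ s : ℕ → Fin d → ℤ, μ ((fun f => (f, s)) ⁻¹' G2set)
      = Hfun (fun j => s (j.1 + 1)) := by
    intro s
    rw [hsliceG2 s, hHfun]
    congr 1
    ext ω
    simp only [Set.mem_setOf_eq, Set.mem_preimage, hGt]
    constructor
    · intro h k
      rw [sum_window (fun i => ξ (s i) ω) k 1]
      refine h (k.1 + 1) (Finset.mem_Icc.2 ⟨by omega, ?_⟩)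
      have := k.isLt
      omega
    · intro h k hk
      obtain ⟨hk1, hkm⟩ := Finset.mem_Icc.1 hk
      have hlt : k - 1 < m := by omega
      have h2 := h ⟨k - 1, hlt⟩
      rw [sum_window (fun i => ξ (s i) ω) ⟨k - 1, hlt⟩ 1] at h2
      have hkk : k - 1 + 1 = k := by omega
      rw [show ((⟨k - 1, hlt⟩ : Fin m) : ℕ) = k - 1 from rfl, hkk] at h2
      exact h2
  -- measurability facts for the window maps
  have hHmeas : Measurable Hfun := measurable_of_countable _
  have hwin2 : Measurable (fun s : ℕ → Fin d → ℤ => (fun j : Fin m => s (j.1 + 2))) :=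
    measurable_pi_lambda _ fun j => measurable_pi_apply _
  have hwin1 : Measurable (fun s : ℕ → Fin d → ℤ => (fun j : Fin m => s (j.1 + 1))) :=
    measurable_pi_lambda _ fun j => measurable_pi_apply _
  have hg1 : Measurable (fun ω (j : Fin m) => S (j.1 + 2) ω - S 1 ω) :=
    measurable_pi_lambda _ fun j => (hSmeas _).sub (hSmeas _)
  have hg2 : Measurable (fun ω (j : Fin m) => S (j.1 + 1) ω) :=
    measurable_pi_lambda _ fun j => hSmeas _
  -- STEP E main chain
  have stepE : (μ.prod ν) Bset = (μ.prod ν) G2set := by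
    calc (μ.prod ν) Bset = ∫⁻ s, μ ((fun f => (f, s)) ⁻¹' Bset) ∂ν := hBint
      _ = ∫⁻ s, Hfun (fun j : Fin m => s (j.1 + 2)) ∂ν := lintegral_congr fun s => hBwin s
      _ = ∫⁻ ω, Hfun (fun j : Fin m => V ω (j.1 + 2)) ∂P := by
          have hcomp2 : Measurable
              (fun s : ℕ → Fin d → ℤ => Hfun (fun j : Fin m => s (j.1 + 2))) :=
            hHmeas.comp hwin2
          rw [hν, lintegral_map hcomp2 hVmeas]
      _ = ∫⁻ ω, Hfun (fun j : Fin m => S (j.1 + 2) ω - S 1 ω) ∂P := by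
          refine lintegral_congr fun ω => ?_
          refine hHpat _ _ fun i j => ?_
          exact sub_left_inj.symm
      _ = ∫⁻ w, Hfun w ∂(Measure.map (fun ω (j : Fin m) => S (j.1 + 2) ω - S 1 ω) P) := by
          rw [lintegral_map hHmeas hg1]
      _ = ∫⁻ w, Hfun w ∂(Measure.map (fun ω (j : Fin m) => S (j.1 + 1) ω) P) := by
          rw [walk_shift_law P S hSmeas hS0 hSindep hSident m]
      _ = ∫⁻ ω, Hfun (fun j : Fin m => V ω (j.1 + 1)) ∂P := by
          rw [lintegral_map hHmeas hg2]
      _ = ∫⁻ s, Hfun (fun j : Fin m => s (j.1 + 1)) ∂ν := by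
          have hcomp1 : Measurable
              (fun s : ℕ → Fin d → ℤ => Hfun (fun j : Fin m => s (j.1 + 1))) :=
            hHmeas.comp hwin1
          rw [hν, lintegral_map hcomp1 hVmeas]
      _ = ∫⁻ s, μ ((fun f => (f, s)) ⁻¹' G2set) ∂ν := lintegral_congr fun s => (hG2win s).symm
      _ = (μ.prod ν) G2set := hG2int.symm
  -- FINAL chain in ℝ≥0∞
  have main : γ (Set.Iic c0) * P {ω | ∀ k ∈ Finset.Icc 1 m, Z k ω ≤ b}
      ≤ P {ω | ∀ k ∈ Finset.Icc 1 T, Z k ω ≤ a} := by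
    calc γ (Set.Iic c0) * P {ω | ∀ k ∈ Finset.Icc 1 m, Z k ω ≤ b}
        = γ (Set.Iic c0) * (μ.prod ν) G2set := by rw [stepB]
      _ = γ (Set.Iic c0) * (μ.prod ν) Bset := by rw [stepE]
      _ = γ (Set.Iic c0) * ∫⁻ s, μ ((fun f => (f, s)) ⁻¹' Bset) ∂ν := by rw [hBint]
      _ = ∫⁻ s, γ (Set.Iic c0) * μ ((fun f => (f, s)) ⁻¹' Bset) ∂ν :=
          (lintegral_const_mul' _ _ (measure_ne_top γ _)).symm
      _ ≤ ∫⁻ s, μ ((fun f => (f, s)) ⁻¹' ABset) ∂ν := lintegral_mono fun s => stepD s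
      _ = (μ.prod ν) ABset := hABint.symm
      _ ≤ P {ω | ∀ k ∈ Finset.Icc 1 T, Z k ω ≤ a} := stepA
  rw [← ENNReal.toReal_mul]
  exact ENNReal.toReal_mono (measure_ne_top P _) main
end

section
/- Suppose there is c₀>0 and T₁ such that E[(Σ_{l=1}^T e^{Z_l})^{-1}] ≥ c₀ T^{H−1} ℓ(T) for all integers T≥T₁. Then for every β > 1−H there exist c>0 and T₀ such that for all integers T≥T₀: P[max_{k=1,...,T} Z_k ≤ β log T] ≥ c T^{H−1} ℓ(T) e^{−√(4β log T)}. -/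
open MeasureTheory Filter ProbabilityTheory

open scoped ENNReal NNReal

lemma stmt17_gauss_pdf_mul (c x : ℝ) :
    gaussianPDFReal 0 1 x * Real.exp (c * x) =
      Real.exp (c ^ 2 / 2) * gaussianPDFReal c 1 x := by
  simp only [gaussianPDFReal, NNReal.coe_one]
  have h1 : -(x - 0) ^ 2 / (2 * 1) + c * x = c ^ 2 / 2 + -(x - c) ^ 2 / (2 * 1) := by ring
  calc (Real.sqrt (2 * Real.pi * 1))⁻¹ * Real.exp (-(x - 0) ^ 2 / (2 * 1)) * Real.exp (c * x)
      = (Real.sqrt (2 * Real.pi * 1))⁻¹ * Real.exp (-(x - 0) ^ 2 / (2 * 1) + c * x) := by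
        rw [mul_assoc, ← Real.exp_add]
    _ = (Real.sqrt (2 * Real.pi * 1))⁻¹ *
          (Real.exp (c ^ 2 / 2) * Real.exp (-(x - c) ^ 2 / (2 * 1))) := by
        rw [h1, Real.exp_add]
    _ = Real.exp (c ^ 2 / 2) *
          ((Real.sqrt (2 * Real.pi * 1))⁻¹ * Real.exp (-(x - c) ^ 2 / (2 * 1))) := by ring

lemma stmt17_gauss_int (c : ℝ) :
    Integrable (fun x => Real.exp (c * x)) (gaussianReal 0 1) ∧
      ∫ x, Real.exp (c * x) ∂(gaussianReal 0 1) = Real.exp (c ^ 2 / 2) := by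
  have hne : (1 : NNReal) ≠ 0 := one_ne_zero
  rw [gaussianReal_of_var_ne_zero 0 hne]
  have hrw : (volume : Measure ℝ).withDensity (gaussianPDF 0 1) =
      (volume : Measure ℝ).withDensity
        (fun x => ((gaussianPDFReal 0 1 x).toNNReal : ℝ≥0∞)) := rfl
  rw [hrw]
  have hmeas : Measurable (fun x => (gaussianPDFReal 0 1 x).toNNReal) :=
    (measurable_gaussianPDFReal 0 1).real_toNNReal
  have hfun : (fun x => (gaussianPDFReal 0 1 x).toNNReal • Real.exp (c * x)) =
      fun x => Real.exp (c ^ 2 / 2) * gaussianPDFReal c 1 x := by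
    funext x
    rw [NNReal.smul_def, smul_eq_mul, Real.coe_toNNReal _ (gaussianPDFReal_nonneg 0 1 x),
      stmt17_gauss_pdf_mul]
  constructor
  · rw [integrable_withDensity_iff_integrable_smul hmeas, hfun]
    exact (integrable_gaussianPDFReal c 1).const_mul _
  · rw [integral_withDensity_eq_integral_smul hmeas, hfun, integral_const_mul,
      integral_gaussianPDFReal_eq_one c hne, mul_one]

set_option maxHeartbeats 2000000 in
/-- Let `Z = (Z_n)_{n ≥ 1}` be a real-valued stochastic process with `Z_1 ~ N(0,1)`,
`H ∈ (0,1)` and `ℓ` slowly varying and positive.  Suppose there are `c₀ > 0` and `T₁`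
such that `E[(∑_{l=1}^T e^{Z_l})⁻¹] ≥ c₀ T^{H-1} ℓ(T)` for every integer `T ≥ T₁`.
Then for every `β > 1 - H` there are `c > 0` and `T₀` such that for all `T ≥ T₀`,
`P[max_{k=1,…,T} Z_k ≤ β log T] ≥ c T^{H-1} ℓ(T) e^{-√(4β log T)}`. -/
theorem stmt17
    {Ω : Type*} [MeasurableSpace Ω] (P : Measure Ω) [IsProbabilityMeasure P]
    (Z : ℕ → Ω → ℝ) (hZmeas : ∀ n, Measurable (Z n))
    (hZ1 : Measure.map (Z 1) P = gaussianReal 0 1)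
    (H : ℝ) (hH : H ∈ Set.Ioo (0 : ℝ) 1)
    (ℓ : ℝ → ℝ) (hℓpos : ∀ x > (0 : ℝ), 0 < ℓ x)
    (hℓslow : ∀ lam > (0 : ℝ),
      Tendsto (fun x : ℝ => ℓ (lam * x) / ℓ x) atTop (nhds 1))
    (c₀ : ℝ) (hc₀ : 0 < c₀) (T₁ : ℕ)
    (hlower : ∀ T : ℕ, T₁ ≤ T →
      c₀ * (T : ℝ) ^ (H - 1) * ℓ T ≤
        ∫ ω, (∑ l ∈ Finset.Icc 1 T, Real.exp (Z l ω))⁻¹ ∂P) :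
    ∀ β : ℝ, 1 - H < β → ∃ c > (0 : ℝ), ∃ T₀ : ℕ, ∀ T ≥ T₀,
      c * (T : ℝ) ^ (H - 1) * ℓ T * Real.exp (-Real.sqrt (4 * β * Real.log T)) ≤
        (P {ω | ∀ k ∈ Finset.Icc 1 T, Z k ω ≤ β * Real.log T}).toReal := by
  classical
  intro β hβ
  obtain ⟨hH0, hH1⟩ := hH
  have hβpos : 0 < β := lt_trans (by linarith) hβ
  -- exponential moments of Z 1
  have hmom : ∀ c : ℝ, Integrable (fun ω => Real.exp (c * Z 1 ω)) P ∧
      ∫ ω, Real.exp (c * Z 1 ω) ∂P = Real.exp (c ^ 2 / 2) := by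
    intro c
    have hg : AEStronglyMeasurable (fun x : ℝ => Real.exp (c * x)) (Measure.map (Z 1) P) :=
      (Real.continuous_exp.comp (continuous_const.mul continuous_id)).aestronglyMeasurable
    have hint := (stmt17_gauss_int c).1
    have hval := (stmt17_gauss_int c).2
    rw [← hZ1] at hint hval
    constructor
    · exact (integrable_map_measure hg (hZmeas 1).aemeasurable).mp hint
    · calc ∫ ω, Real.exp (c * Z 1 ω) ∂P
          = ∫ x, Real.exp (c * x) ∂(Measure.map (Z 1) P) :=
            (integral_map (hZmeas 1).aemeasurable hg).symm
        _ = Real.exp (c ^ 2 / 2) := hval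
  -- basic facts about the reciprocal sums
  set f : ℕ → Ω → ℝ := fun T ω => (∑ l ∈ Finset.Icc 1 T, Real.exp (Z l ω))⁻¹ with hfdef
  have hsum_pos : ∀ T : ℕ, 1 ≤ T → ∀ ω, 0 < ∑ l ∈ Finset.Icc 1 T, Real.exp (Z l ω) := by
    intro T hT ω
    exact Finset.sum_pos (fun i _ => Real.exp_pos _)
      ⟨1, Finset.mem_Icc.mpr ⟨le_refl 1, hT⟩⟩
  have hf_nonneg : ∀ T ω, 0 ≤ f T ω := by
    intro T ω
    exact inv_nonneg.mpr (Finset.sum_nonneg fun i _ => (Real.exp_pos _).le)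
  have hf_le : ∀ T : ℕ, 1 ≤ T → ∀ ω, f T ω ≤ Real.exp (-(Z 1 ω)) := by
    intro T hT ω
    have hmem1 : (1 : ℕ) ∈ Finset.Icc 1 T := Finset.mem_Icc.mpr ⟨le_refl 1, hT⟩
    have hs : Real.exp (Z 1 ω) ≤ ∑ l ∈ Finset.Icc 1 T, Real.exp (Z l ω) :=
      Finset.single_le_sum (fun i _ => (Real.exp_pos (Z i ω)).le) hmem1
    calc f T ω ≤ (Real.exp (Z 1 ω))⁻¹ := inv_anti₀ (Real.exp_pos _) hs
      _ = Real.exp (-(Z 1 ω)) := (Real.exp_neg _).symm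
  have hf_meas : ∀ T, Measurable (f T) := by
    intro T
    exact (Finset.measurable_sum _ (fun l _ => Real.measurable_exp.comp (hZmeas l))).inv
  have hf_int : ∀ T : ℕ, 1 ≤ T → Integrable (f T) P := by
    intro T hT
    refine ((hmom (-1)).1).mono ((hf_meas T).aestronglyMeasurable) (ae_of_all _ fun ω => ?_)
    rw [Real.norm_eq_abs, Real.norm_eq_abs, abs_of_nonneg (hf_nonneg T ω),
      abs_of_nonneg (Real.exp_pos _).le, neg_one_mul]
    exact hf_le T hT ω
  have hmono : ∀ S T : ℕ, 1 ≤ T → T ≤ S →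
      ∫ ω, f S ω ∂P ≤ ∫ ω, f T ω ∂P := by
    intro S T hT hTS
    refine integral_mono (hf_int S (le_trans hT hTS)) (hf_int T hT) (fun ω => ?_)
    have hsub : ∑ l ∈ Finset.Icc 1 T, Real.exp (Z l ω) ≤
        ∑ l ∈ Finset.Icc 1 S, Real.exp (Z l ω) :=
      Finset.sum_le_sum_of_subset_of_nonneg (Finset.Icc_subset_Icc_right hTS)
        (fun i _ _ => (Real.exp_pos _).le)
    exact inv_anti₀ (hsum_pos T hT ω) hsub
  -- slow variation at ratio 2
  set η : ℝ := (β - (1 - H)) / 2 with hηdef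
  have hη : 0 < η := by simp only [hηdef]; linarith
  have h2 : Tendsto (fun x : ℝ => ℓ (2 * x) / ℓ x) atTop (nhds 1) := hℓslow 2 (by norm_num)
  have hlt1 : (2 : ℝ) ^ (-η) < 1 :=
    Real.rpow_lt_one_of_one_lt_of_neg one_lt_two (neg_lt_zero.mpr hη)
  have hev : ∀ᶠ x : ℝ in atTop, (2 : ℝ) ^ (-η) < ℓ (2 * x) / ℓ x :=
    h2.eventually (eventually_gt_nhds hlt1)
  obtain ⟨X₀, hX₀⟩ := eventually_atTop.mp (hev.and (eventually_ge_atTop 1))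
  set X₁ : ℝ := max X₀ 1 with hX₁def
  have hstep : ∀ x : ℝ, X₁ ≤ x → (2 : ℝ) ^ (-η) * ℓ x ≤ ℓ (2 * x) := by
    intro x hx
    have hx0 : X₀ ≤ x := le_trans (le_max_left _ _) hx
    have hx1 : (1 : ℝ) ≤ x := le_trans (le_max_right _ _) hx
    have h := (hX₀ x hx0).1
    have hℓx : 0 < ℓ x := hℓpos x (by linarith)
    have h' := (lt_div_iff₀ hℓx).mp h
    linarith
  -- anchor point
  set Tstar : ℕ := max (max T₁ 1) ⌈X₁⌉₊ with hTstardef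
  have hTstar1 : 1 ≤ Tstar := le_trans (le_max_right T₁ 1) (le_max_left _ _)
  have hTstarT₁ : T₁ ≤ Tstar := le_trans (le_max_left T₁ 1) (le_max_left _ _)
  have hTstarX : X₁ ≤ (Tstar : ℝ) := by
    have h1 : X₁ ≤ (⌈X₁⌉₊ : ℝ) := Nat.le_ceil X₁
    have h2 : (⌈X₁⌉₊ : ℝ) ≤ (Tstar : ℝ) := by
      exact_mod_cast Nat.cast_le.mpr (le_max_right (max T₁ 1) ⌈X₁⌉₊)
    linarith
  have hTstarpos : (0 : ℝ) < (Tstar : ℝ) := by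
    have : (1 : ℝ) ≤ (Tstar : ℝ) := by exact_mod_cast hTstar1
    linarith
  have hℓTstar : 0 < ℓ Tstar := hℓpos _ hTstarpos
  have hanchor : ∀ k : ℕ, ℓ Tstar * ((2 : ℝ) ^ (k : ℕ)) ^ (-η) ≤ ℓ ((2 : ℝ) ^ (k : ℕ) * Tstar) := by
    intro k
    induction k with
    | zero => simp
    | succ k ih =>
      have hx : X₁ ≤ (2 : ℝ) ^ k * Tstar := by
        have h1 : (1 : ℝ) ≤ (2 : ℝ) ^ k := one_le_pow₀ (by norm_num)
        nlinarith [hTstarX, hTstarpos]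
      have hstep' := hstep ((2 : ℝ) ^ k * Tstar) hx
      have hmul : (2 : ℝ) ^ (-η) * (ℓ Tstar * ((2 : ℝ) ^ k) ^ (-η)) ≤
          (2 : ℝ) ^ (-η) * ℓ ((2 : ℝ) ^ k * Tstar) := by
        refine mul_le_mul_of_nonneg_left ih (Real.rpow_nonneg (by norm_num) _)
      have hpowrw : ((2 : ℝ) ^ (k + 1 : ℕ)) ^ (-η) = (2 : ℝ) ^ (-η) * ((2 : ℝ) ^ k) ^ (-η) := by
        rw [pow_succ, mul_comm ((2:ℝ)^k) 2, Real.mul_rpow (by norm_num) (by positivity)]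
      have harg : (2 : ℝ) ^ (k + 1 : ℕ) * Tstar = 2 * ((2 : ℝ) ^ k * Tstar) := by ring
      rw [harg, hpowrw]
      calc ℓ Tstar * ((2 : ℝ) ^ (-η) * ((2 : ℝ) ^ k) ^ (-η))
          = (2 : ℝ) ^ (-η) * (ℓ Tstar * ((2 : ℝ) ^ k) ^ (-η)) := by ring
        _ ≤ (2 : ℝ) ^ (-η) * ℓ ((2 : ℝ) ^ k * Tstar) := hmul
        _ ≤ ℓ (2 * ((2 : ℝ) ^ k * Tstar)) := hstep'
  -- constant for the polynomial lower bound
  set ρ : ℝ := H - 1 - η with hρdef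
  set c₂ : ℝ := c₀ * ℓ Tstar * (Tstar : ℝ) ^ η * (2 : ℝ) ^ ρ with hc₂def
  have hc₂pos : 0 < c₂ := by
    have h1 : (0:ℝ) < (Tstar : ℝ) ^ η := Real.rpow_pos_of_pos hTstarpos η
    have h2 : (0:ℝ) < (2 : ℝ) ^ ρ := Real.rpow_pos_of_pos (by norm_num) ρ
    positivity
  have hElower : ∀ T : ℕ, Tstar ≤ T → c₂ * (T : ℝ) ^ ρ ≤ ∫ ω, f T ω ∂P := by
    intro T hT
    have hT1 : 1 ≤ T := le_trans hTstar1 hT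
    have hTpos : (0:ℝ) < (T:ℝ) := by exact_mod_cast Nat.lt_of_lt_of_le Nat.zero_lt_one hT1
    have hex : ∃ k : ℕ, T ≤ 2 ^ k * Tstar := by
      refine ⟨T, ?_⟩
      calc T ≤ 2 ^ T := (Nat.lt_two_pow_self (n := T)).le
        _ ≤ 2 ^ T * Tstar := Nat.le_mul_of_pos_right _ hTstar1
    have hkspec : T ≤ 2 ^ (Nat.find hex) * Tstar := Nat.find_spec hex
    set k : ℕ := Nat.find hex with hkdef
    have hkup : 2 ^ k * Tstar < 2 * T := by
      rcases Nat.eq_zero_or_pos k with hk0 | hkpos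
      · have h0 : 2 ^ k * Tstar = Tstar := by rw [hk0]; simp
        omega
      · have hmin := Nat.find_min hex (show k - 1 < k from Nat.sub_lt hkpos one_pos)
        push_neg at hmin
        have h2k : 2 ^ k = 2 * 2 ^ (k - 1) := by
          rw [← pow_succ']
          congr 1
          omega
        calc 2 ^ k * Tstar = 2 * (2 ^ (k - 1) * Tstar) := by rw [h2k]; ring
          _ < 2 * T := by omega
    set X : ℕ := 2 ^ k * Tstar with hXdef
    have hXT₁ : T₁ ≤ X := le_trans hTstarT₁ (le_trans hT hkspec)
    have h1 : c₀ * (X:ℝ) ^ (H - 1) * ℓ X ≤ ∫ ω, f X ω ∂P := hlower X hXT₁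
    have h2 : ∫ ω, f X ω ∂P ≤ ∫ ω, f T ω ∂P := hmono X T hT1 hkspec
    have hXcast : (X:ℝ) = (2:ℝ) ^ (k:ℕ) * (Tstar:ℝ) := by
      rw [hXdef]; push_cast; ring
    have hX2T : (X:ℝ) ≤ 2 * (T:ℝ) := by exact_mod_cast hkup.le
    have hXge : (T:ℝ) ≤ (X:ℝ) := by exact_mod_cast hkspec
    have hXpos : (0:ℝ) < (X:ℝ) := lt_of_lt_of_le hTpos hXge
    have hℓX : ℓ Tstar * ((2:ℝ) ^ (k:ℕ)) ^ (-η) ≤ ℓ X := by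
      rw [hXcast]; exact hanchor k
    have hpow : ((2:ℝ) ^ (k:ℕ)) ^ (-η) = (X:ℝ) ^ (-η) * (Tstar:ℝ) ^ η := by
      rw [hXcast, Real.mul_rpow (by positivity) (by positivity), mul_assoc,
        ← Real.rpow_add hTstarpos]
      simp
    have hXη : (2 * (T:ℝ)) ^ (-η) ≤ (X:ℝ) ^ (-η) := by
      rw [Real.rpow_neg (by positivity), Real.rpow_neg (by positivity)]
      exact inv_anti₀ (Real.rpow_pos_of_pos hXpos η)
        (Real.rpow_le_rpow hXpos.le hX2T hη.le)
    have hXH : (2 * (T:ℝ)) ^ (H - 1) ≤ (X:ℝ) ^ (H - 1) := by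
      rw [show H - 1 = -(1 - H) by ring, Real.rpow_neg (by positivity),
        Real.rpow_neg (by positivity)]
      exact inv_anti₀ (Real.rpow_pos_of_pos hXpos _)
        (Real.rpow_le_rpow hXpos.le hX2T (by linarith))
    have hℓXpos : 0 < ℓ X := hℓpos _ hXpos
    have hℓX' : ℓ Tstar * ((2 * (T:ℝ)) ^ (-η) * (Tstar:ℝ) ^ η) ≤ ℓ X := by
      refine le_trans ?_ hℓX
      rw [hpow]
      have hmm := mul_le_mul_of_nonneg_right hXη (Real.rpow_nonneg hTstarpos.le η)
      exact mul_le_mul_of_nonneg_left hmm hℓTstar.le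
    have hchain : c₂ * (T:ℝ) ^ ρ ≤ c₀ * (X:ℝ) ^ (H - 1) * ℓ X := by
      have e1 : (2 * (T:ℝ)) ^ (H - 1) = (2:ℝ) ^ (H - 1) * (T:ℝ) ^ (H - 1) :=
        Real.mul_rpow (by norm_num) hTpos.le
      have e2 : (2 * (T:ℝ)) ^ (-η) = (2:ℝ) ^ (-η) * (T:ℝ) ^ (-η) :=
        Real.mul_rpow (by norm_num) hTpos.le
      have e3 : (2:ℝ) ^ ρ = (2:ℝ) ^ (H - 1) * (2:ℝ) ^ (-η) := by
        rw [← Real.rpow_add (by norm_num : (0:ℝ) < 2)]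
        congr 1
      have e4 : (T:ℝ) ^ ρ = (T:ℝ) ^ (H - 1) * (T:ℝ) ^ (-η) := by
        rw [← Real.rpow_add hTpos]
        congr 1
      calc c₂ * (T:ℝ) ^ ρ
          = c₀ * ((2 * (T:ℝ)) ^ (H - 1)) * (ℓ Tstar * ((2 * (T:ℝ)) ^ (-η) * (Tstar:ℝ) ^ η)) := by
            rw [hc₂def, e1, e2, e3, e4]; ring
        _ ≤ c₀ * ((2 * (T:ℝ)) ^ (H - 1)) * ℓ X := by
            refine mul_le_mul_of_nonneg_left hℓX' ?_
            have := Real.rpow_nonneg (by positivity : (0:ℝ) ≤ 2 * (T:ℝ)) (H - 1)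
            positivity
        _ ≤ c₀ * (X:ℝ) ^ (H - 1) * ℓ X :=
            mul_le_mul_of_nonneg_right (mul_le_mul_of_nonneg_left hXH hc₀.le) hℓXpos.le
    linarith
  -- thresholds
  set N₂ : ℕ := ⌈(4 / c₂) ^ (η⁻¹)⌉₊ + 1 with hN₂def
  set N₃ : ℕ := ⌈Real.exp (4 / β)⌉₊ + 1 with hN₃def
  refine ⟨c₀ / 2, by linarith, max (max Tstar N₂) N₃, ?_⟩
  intro T hT
  -- numeric facts about T
  have hTTstar : Tstar ≤ T := le_trans (le_max_left _ _) (le_trans (le_max_left _ _) hT)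
  have hT1 : 1 ≤ T := le_trans hTstar1 hTTstar
  have hTT₁ : T₁ ≤ T := le_trans hTstarT₁ hTTstar
  have hTpos : (0:ℝ) < (T:ℝ) := by exact_mod_cast Nat.lt_of_lt_of_le Nat.zero_lt_one hT1
  have hTN₂ : ((4 / c₂) ^ (η⁻¹) : ℝ) ≤ (T:ℝ) := by
    have h1 : ((4 / c₂) ^ (η⁻¹) : ℝ) ≤ (⌈(4 / c₂) ^ (η⁻¹)⌉₊ : ℝ) := Nat.le_ceil _
    have h2 : (N₂ : ℝ) ≤ (T:ℝ) := by
      exact_mod_cast le_trans (le_max_right Tstar N₂) (le_trans (le_max_left _ _) hT)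
    have h3 : (⌈(4 / c₂) ^ (η⁻¹)⌉₊ : ℝ) ≤ (N₂ : ℝ) := by
      rw [hN₂def]; push_cast; linarith
    linarith
  have hTN₃ : Real.exp (4 / β) ≤ (T:ℝ) := by
    have h1 : Real.exp (4 / β) ≤ (⌈Real.exp (4 / β)⌉₊ : ℝ) := Nat.le_ceil _
    have h2 : (N₃ : ℝ) ≤ (T:ℝ) := by exact_mod_cast le_trans (le_max_right _ _) hT
    have h3 : (⌈Real.exp (4 / β)⌉₊ : ℝ) ≤ (N₃ : ℝ) := by rw [hN₃def]; push_cast; linarith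
    linarith
  have hlog : 4 / β ≤ Real.log T := by
    have := Real.log_le_log (Real.exp_pos _) hTN₃
    rwa [Real.log_exp] at this
  have hlogpos : 0 < Real.log T := lt_of_lt_of_le (by positivity) hlog
  have hβlog : 4 ≤ β * Real.log T := by
    rw [div_le_iff₀ hβpos] at hlog
    linarith [mul_comm β (Real.log T)]
  -- the quantity a
  set a : ℝ := Real.sqrt (4 * β * Real.log T) with hadef
  have hprod_nonneg : (0:ℝ) ≤ 4 * β * Real.log T := by positivity
  have ha_nonneg : 0 ≤ a := Real.sqrt_nonneg _
  have ha_sq : a ^ 2 = 4 * β * Real.log T := Real.sq_sqrt hprod_nonneg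
  have ha_one : 1 ≤ a := by
    rw [hadef]
    rw [Real.le_sqrt zero_le_one hprod_nonneg]
    nlinarith [hlogpos]
  have ha_le : a ≤ β * Real.log T := by
    have h1 : 4 * β * Real.log T ≤ (β * Real.log T) ^ 2 := by nlinarith
    calc a = Real.sqrt (4 * β * Real.log T) := rfl
      _ ≤ Real.sqrt ((β * Real.log T) ^ 2) := Real.sqrt_le_sqrt h1
      _ = β * Real.log T := Real.sqrt_sq (by positivity)
  have hexpa : Real.exp a ≤ (T:ℝ) ^ β := by
    rw [Real.rpow_def_of_pos hTpos, mul_comm]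
    exact Real.exp_le_exp.mpr ha_le
  -- the event A
  set L : ℝ := β * Real.log T with hLdef
  set A : Set Ω := {ω | ∀ k ∈ Finset.Icc 1 T, Z k ω ≤ L} with hAdef
  have hAmeas : MeasurableSet A := by
    have : A = ⋂ k ∈ Finset.Icc 1 T, {ω | Z k ω ≤ L} := by
      ext ω
      rw [Set.mem_iInter₂]
      exact Iff.rfl
    rw [this]
    exact MeasurableSet.biInter (Finset.Icc 1 T).countable_toSet
      (fun k _ => measurableSet_le (hZmeas k) measurable_const)
  -- pointwise estimate
  have hpt : ∀ ω, f T ω ≤ A.indicator (fun _ => Real.exp a) ω + (T:ℝ) ^ (-β) +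
      Real.exp (a - a ^ 2) * Real.exp (-a * Z 1 ω) := by
    intro ω
    have hrpownn : (0:ℝ) ≤ (T:ℝ) ^ (-β) := Real.rpow_nonneg hTpos.le _
    have hthird : (0:ℝ) ≤ Real.exp (a - a ^ 2) * Real.exp (-a * Z 1 ω) := by positivity
    by_cases hA : ω ∈ A
    · rw [Set.indicator_of_mem hA]
      by_cases hz : -a ≤ Z 1 ω
      · have h1 : f T ω ≤ Real.exp a := by
          calc f T ω ≤ Real.exp (-(Z 1 ω)) := hf_le T hT1 ω
            _ ≤ Real.exp a := Real.exp_le_exp.mpr (by linarith)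
        linarith
      · push_neg at hz
        have h1 : f T ω ≤ Real.exp (a - a ^ 2) * Real.exp (-a * Z 1 ω) := by
          rw [← Real.exp_add]
          calc f T ω ≤ Real.exp (-(Z 1 ω)) := hf_le T hT1 ω
            _ ≤ Real.exp (a - a ^ 2 + -a * Z 1 ω) := by
                refine Real.exp_le_exp.mpr ?_
                nlinarith [mul_nonneg (sub_nonneg.mpr ha_one) (by linarith : (0:ℝ) ≤ -(Z 1 ω) - a)]
        have : (0:ℝ) ≤ Real.exp a := (Real.exp_pos a).le
        linarith
    · rw [Set.indicator_of_notMem hA]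
      have hA' : ∃ k ∈ Finset.Icc 1 T, L < Z k ω := by
        by_contra hcon
        push_neg at hcon
        exact hA (fun k hk => hcon k hk)
      obtain ⟨k, hk, hkgt⟩ := hA'
      have hsumge : Real.exp L ≤ ∑ l ∈ Finset.Icc 1 T, Real.exp (Z l ω) := by
        calc Real.exp L ≤ Real.exp (Z k ω) := Real.exp_le_exp.mpr hkgt.le
          _ ≤ ∑ l ∈ Finset.Icc 1 T, Real.exp (Z l ω) :=
            Finset.single_le_sum (fun i _ => (Real.exp_pos (Z i ω)).le) hk
      have h1 : f T ω ≤ (T:ℝ) ^ (-β) := by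
        have : (T:ℝ) ^ (-β) = (Real.exp L)⁻¹ := by
          rw [← Real.exp_neg, Real.rpow_def_of_pos hTpos, hLdef]
          congr 1
          ring
        rw [this]
        exact inv_anti₀ (Real.exp_pos _) hsumge
      have : (0:ℝ) ≤ Real.exp a := (Real.exp_pos a).le
      linarith
  -- integrate the pointwise estimate
  have hint1 : Integrable (fun ω => A.indicator (fun _ => Real.exp a) ω) P := by
    exact (integrable_const (Real.exp a)).indicator hAmeas
  have hint2 : Integrable (fun _ : Ω => (T:ℝ) ^ (-β)) P := integrable_const _
  have hint12 : Integrable (fun ω => A.indicator (fun _ => Real.exp a) ω + (T:ℝ) ^ (-β)) P := by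
    exact hint1.add hint2
  have hint3 : Integrable (fun ω => Real.exp (a - a ^ 2) * Real.exp (-a * Z 1 ω)) P :=
    ((hmom (-a)).1).const_mul _
  have hintG : Integrable (fun ω => A.indicator (fun _ => Real.exp a) ω + (T:ℝ) ^ (-β) +
      Real.exp (a - a ^ 2) * Real.exp (-a * Z 1 ω)) P := by
    exact hint12.add hint3
  have hkey : ∫ ω, f T ω ∂P ≤
      Real.exp a * (P A).toReal + (T:ℝ) ^ (-β) + Real.exp (a - a ^ 2) * Real.exp (a ^ 2 / 2) := by
    have hmono' := integral_mono (hf_int T hT1) hintG hpt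
    have e1 : ∫ ω, A.indicator (fun _ => Real.exp a) ω ∂P = (P A).toReal * Real.exp a := by
      rw [integral_indicator hAmeas, setIntegral_const, smul_eq_mul]; rfl
    have e2 : ∫ _ω : Ω, (T:ℝ) ^ (-β) ∂P = (T:ℝ) ^ (-β) := by
      simp [integral_const]
    have e3 : ∫ ω, Real.exp (a - a ^ 2) * Real.exp (-a * Z 1 ω) ∂P =
        Real.exp (a - a ^ 2) * Real.exp (a ^ 2 / 2) := by
      rw [integral_const_mul, (hmom (-a)).2]
      congr 2
      ring
    rw [integral_add hint12 hint3, integral_add hint1 hint2, e1, e2, e3] at hmono'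
    linarith
  -- bound the third term
  have hthird_le : Real.exp (a - a ^ 2) * Real.exp (a ^ 2 / 2) ≤ (T:ℝ) ^ (-β) := by
    have h1 : Real.exp (a - a ^ 2) * Real.exp (a ^ 2 / 2) = Real.exp a * Real.exp (-(a ^ 2) / 2) := by
      rw [← Real.exp_add, ← Real.exp_add]
      congr 1
      ring
    have h2 : Real.exp (-(a ^ 2) / 2) = (T:ℝ) ^ (-(2*β)) := by
      rw [Real.rpow_def_of_pos hTpos, ha_sq]
      congr 1
      ring
    have h3 : (T:ℝ) ^ β * (T:ℝ) ^ (-(2*β)) = (T:ℝ) ^ (-β) := by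
      rw [← Real.rpow_add hTpos]
      congr 1
      ring
    calc Real.exp (a - a ^ 2) * Real.exp (a ^ 2 / 2)
        = Real.exp a * Real.exp (-(a ^ 2) / 2) := h1
      _ ≤ (T:ℝ) ^ β * Real.exp (-(a ^ 2) / 2) :=
          mul_le_mul_of_nonneg_right hexpa (Real.exp_pos _).le
      _ = (T:ℝ) ^ β * (T:ℝ) ^ (-(2*β)) := by rw [h2]
      _ = (T:ℝ) ^ (-β) := h3
  -- compare T^{-β} with the lower bound on the integral
  have hTβsmall : 4 * (T:ℝ) ^ (-β) ≤ c₂ * (T:ℝ) ^ ρ := by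
    have h4c : (0:ℝ) < 4 / c₂ := by positivity
    have h1 : 4 / c₂ ≤ (T:ℝ) ^ η := by
      calc (4 / c₂ : ℝ) = ((4 / c₂) ^ (η⁻¹)) ^ η := (Real.rpow_inv_rpow h4c.le hη.ne').symm
        _ ≤ (T:ℝ) ^ η := Real.rpow_le_rpow (by positivity) hTN₂ hη.le
    have h2 : (T:ℝ) ^ ρ = (T:ℝ) ^ η * (T:ℝ) ^ (-β) := by
      rw [← Real.rpow_add hTpos]
      congr 1
      rw [hρdef, hηdef]
      ring
    have h3 : (0:ℝ) < (T:ℝ) ^ (-β) := Real.rpow_pos_of_pos hTpos _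
    calc 4 * (T:ℝ) ^ (-β) = (4 / c₂) * (T:ℝ) ^ (-β) * c₂ := by field_simp
      _ ≤ (T:ℝ) ^ η * (T:ℝ) ^ (-β) * c₂ := by
          refine mul_le_mul_of_nonneg_right (mul_le_mul_of_nonneg_right h1 h3.le) hc₂pos.le
      _ = c₂ * (T:ℝ) ^ ρ := by rw [h2]; ring
  -- put everything together
  have hE1 : c₀ * (T:ℝ) ^ (H - 1) * ℓ (T:ℝ) ≤ ∫ ω, f T ω ∂P := hlower T hTT₁
  have hE2 : c₂ * (T:ℝ) ^ ρ ≤ ∫ ω, f T ω ∂P := hElower T hTTstar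
  have hmain : c₀ / 2 * (T:ℝ) ^ (H - 1) * ℓ (T:ℝ) ≤ Real.exp a * (P A).toReal := by
    have h1 : ∫ ω, f T ω ∂P ≤ Real.exp a * (P A).toReal + 2 * (T:ℝ) ^ (-β) := by
      linarith
    linarith
  have hgoal : c₀ / 2 * (T:ℝ) ^ (H - 1) * ℓ (T:ℝ) * Real.exp (-a) ≤ (P A).toReal := by
    rw [Real.exp_neg]
    rw [mul_inv_le_iff₀ (Real.exp_pos a)]
    linarith [hmain]
  exact hgoal
end
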